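/- For every real p ≥ 1 there exist finite positive constants L_{aC}, L_{aH}, L_{NC}, L_{NH} such that for all C₁, C₂, H₁, H₂ ∈ ℝ the growth rate a and nucleation rate N satisfy |a(C₁,H₁) − a(C₂,H₂)|^{2p} ≤ L_{aC}·|C₁ − C₂|^p + L_{aH}·|H₁ − H₂|^p and |N(C₁,H₁) − N(C₂,H₂)|^{2p} ≤ L_{NC}·|C₁ − C₂|^p + L_{NH}·|H₁ − H₂|^p. -/

import Mathlib

open Real

/-! ### Auxiliary elementary estimates -/

lemma aux11_exp_neg_le_inv (t : ℝ) (ht : 0 < t) : Real.exp (-t) ≤ 1 / t := by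
  rw [Real.exp_neg, one_div]
  exact inv_anti₀ ht (by linarith [Real.add_one_le_exp t])

lemma aux11_quad_le_exp (t : ℝ) (ht : 0 ≤ t) : 1 + t + t ^ 2 / 4 ≤ Real.exp t := by
  have h1 : 1 + t / 2 ≤ Real.exp (t / 2) := by linarith [Real.add_one_le_exp (t / 2)]
  have h2 : Real.exp (t / 2) * Real.exp (t / 2) = Real.exp t := by
    rw [← Real.exp_add]; ring_nf
  nlinarith [Real.exp_pos (t / 2)]

lemma aux11_exp_neg_le_sq (t : ℝ) (ht : 0 < t) : Real.exp (-t) ≤ 4 / t ^ 2 := by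
  rw [Real.exp_neg]
  have h : t ^ 2 / 4 ≤ Real.exp t := by nlinarith [aux11_quad_le_exp t ht.le]
  calc (Real.exp t)⁻¹ ≤ (t ^ 2 / 4)⁻¹ := inv_anti₀ (by positivity) h
    _ = 4 / t ^ 2 := by rw [inv_div]

lemma aux11_cosh_lower (t : ℝ) (ht : 0 ≤ t) : 1 + t ^ 2 / 8 ≤ Real.cosh t := by
  rw [Real.cosh_eq]
  have h1 := aux11_quad_le_exp t ht
  have h2 := Real.add_one_le_exp (-t)
  nlinarith

lemma aux11_hasDerivAt_tanh (x : ℝ) : HasDerivAt Real.tanh (1 / Real.cosh x ^ 2) x := by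
  have h := (Real.hasDerivAt_sinh x).fun_div (Real.hasDerivAt_cosh x) (Real.cosh_pos x).ne'
  have e : Real.tanh = fun x => Real.sinh x / Real.cosh x :=
    funext fun x => Real.tanh_eq_sinh_div_cosh x
  rw [e]
  refine h.congr_deriv ?_
  have := Real.cosh_sq_sub_sinh_sq x
  field_simp
  nlinarith [Real.cosh_pos x]

lemma aux11_tanh_mem (x : ℝ) (hx : 0 ≤ x) : 0 ≤ Real.tanh x ∧ Real.tanh x ≤ 1 := by
  rw [Real.tanh_eq_sinh_div_cosh]
  have hc := Real.cosh_pos x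
  have hs : 0 ≤ Real.sinh x := Real.sinh_nonneg_iff.mpr hx
  have hsc : Real.sinh x ≤ Real.cosh x := by
    have := Real.cosh_sub_sinh x
    nlinarith [Real.exp_pos (-x)]
  constructor
  · positivity
  · rw [div_le_one hc]; exact hsc

/-! ### The function `φ(u) = tanh(max(u-1,0)²)` -/

lemma aux11_hasDerivAt_relu_sq (u : ℝ) :
    HasDerivAt (fun x : ℝ => max (x - 1) 0 ^ 2) (2 * max (u - 1) 0) u := by
  rcases lt_trichotomy u 1 with h | h | h
  · have hev : (fun x : ℝ => max (x - 1) 0 ^ 2) =ᶠ[nhds u] fun _ => (0 : ℝ) := by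
      filter_upwards [eventually_lt_nhds h] with x hx
      rw [max_eq_right (by linarith)]; ring
    have h0 : max (u - 1) 0 = 0 := max_eq_right (by linarith)
    rw [h0, mul_zero]
    exact (hasDerivAt_const u (0:ℝ)).congr_of_eventuallyEq hev
  · subst h
    rw [hasDerivAt_iff_isLittleO, Asymptotics.isLittleO_iff]
    intro c hc
    filter_upwards [eventually_abs_sub_lt 1 hc] with x hx
    have h2 : max (x - 1) 0 ^ 2 ≤ |x - 1| * |x - 1| := by
      rcases le_or_gt x 1 with h' | h'
      · rw [max_eq_right (by linarith)]
        nlinarith [abs_nonneg (x - 1)]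
      · rw [max_eq_left (by linarith), abs_of_pos (by linarith)]; nlinarith
    have h3 : (0:ℝ) ≤ max (x - 1) 0 ^ 2 := by positivity
    rw [Real.norm_eq_abs, Real.norm_eq_abs]
    calc |max (x - 1) 0 ^ 2 - max (1 - 1) 0 ^ 2 - (x - 1) • (2 * max (1 - (1:ℝ)) 0)|
        = max (x - 1) 0 ^ 2 := by norm_num
      _ ≤ |x - 1| * |x - 1| := h2
      _ ≤ c * |x - 1| := by nlinarith [abs_nonneg (x - 1)]
  · have hev : (fun x : ℝ => max (x - 1) 0 ^ 2) =ᶠ[nhds u] fun x => (x - 1) ^ 2 := by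
      filter_upwards [eventually_gt_nhds h] with x hx
      rw [max_eq_left (by linarith)]
    have hd : HasDerivAt (fun x : ℝ => (x - 1) ^ 2) (2 * (u - 1)) u := by
      have := ((hasDerivAt_id u).sub_const 1).fun_pow 2
      simpa using this
    rw [max_eq_left (by linarith)]
    exact hd.congr_of_eventuallyEq hev

noncomputable def aux11_phi (u : ℝ) : ℝ := Real.tanh (max (u - 1) 0 ^ 2)
noncomputable def aux11_phi' (u : ℝ) : ℝ :=
  2 * max (u - 1) 0 / Real.cosh (max (u - 1) 0 ^ 2) ^ 2

lemma aux11_hasDerivAt_phi (u : ℝ) : HasDerivAt aux11_phi (aux11_phi' u) u := by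
  have h := (aux11_hasDerivAt_tanh (max (u - 1) 0 ^ 2)).comp u (aux11_hasDerivAt_relu_sq u)
  refine h.congr_deriv ?_
  unfold aux11_phi'
  ring

lemma aux11_phi'_nonneg (u : ℝ) : 0 ≤ aux11_phi' u := by
  unfold aux11_phi'
  positivity

lemma aux11_cosh_sq_lower (v : ℝ) (hv : 0 ≤ v) :
    1 + v ^ 4 / 4 ≤ Real.cosh (v ^ 2) ^ 2 := by
  have h := aux11_cosh_lower (v ^ 2) (by positivity)
  nlinarith [Real.cosh_pos (v ^ 2)]

lemma aux11_phi'_le (u : ℝ) : aux11_phi' u ≤ 8 := by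
  unfold aux11_phi'
  set v := max (u - 1) 0 with hv
  have hv0 : 0 ≤ v := le_max_right _ _
  have hc := aux11_cosh_sq_lower v hv0
  have hcpos : (0:ℝ) < Real.cosh (v ^ 2) ^ 2 := by positivity
  rw [div_le_iff₀ hcpos]
  nlinarith [sq_nonneg (v^2-1), sq_nonneg (v-1)]

lemma aux11_mul_phi'_le (u : ℝ) : u * aux11_phi' u ≤ 8 := by
  rcases le_or_gt u 1 with h | h
  · unfold aux11_phi'
    rw [max_eq_right (by linarith)]
    norm_num
  · obtain ⟨v, hv0, hu⟩ : ∃ v : ℝ, 0 < v ∧ u = v + 1 := ⟨u - 1, by linarith, by ring⟩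
    subst hu
    unfold aux11_phi'
    have h0 : v + 1 - 1 = v := by ring
    rw [h0, max_eq_left hv0.le]
    have hc := aux11_cosh_sq_lower v hv0.le
    have hcpos : (0:ℝ) < Real.cosh (v ^ 2) ^ 2 := by positivity
    rw [show (v+1) * (2 * v / Real.cosh (v^2)^2) = (v+1)*(2*v) / Real.cosh (v^2)^2 from by
      ring, div_le_iff₀ hcpos]
    nlinarith [sq_nonneg (v^2-1), sq_nonneg (v-1), sq_nonneg (v^2 - 1/2)]

lemma aux11_mul_phi'_nonneg (u : ℝ) : 0 ≤ u * aux11_phi' u := by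
  rcases le_or_gt u 1 with h | h
  · have h0 : aux11_phi' u = 0 := by
      unfold aux11_phi'
      rw [max_eq_right (by linarith)]; norm_num
    rw [h0]; norm_num
  · exact mul_nonneg (by linarith) (aux11_phi'_nonneg u)

lemma aux11_phi_mem (u : ℝ) : 0 ≤ aux11_phi u ∧ aux11_phi u ≤ 1 :=
  aux11_tanh_mem _ (by positivity)

/-! ### The function `θ(u) = exp(-δ/(u-1)²)·[u>1]` -/

noncomputable def aux11_th (δ u : ℝ) : ℝ :=
  if 1 < u then Real.exp (-δ / (u - 1) ^ 2) else 0
noncomputable def aux11_th' (δ u : ℝ) : ℝ :=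
  if 1 < u then Real.exp (-δ / (u - 1) ^ 2) * (2 * δ / (u - 1) ^ 3) else 0

lemma aux11_hasDerivAt_th {δ : ℝ} (hδ : 0 < δ) (u : ℝ) :
    HasDerivAt (aux11_th δ) (aux11_th' δ u) u := by
  rcases lt_trichotomy u 1 with h | h | h
  · have hev : aux11_th δ =ᶠ[nhds u] fun _ => (0 : ℝ) := by
      filter_upwards [eventually_lt_nhds h] with x hx
      simp [aux11_th, not_lt.mpr hx.le, if_neg]
    rw [aux11_th', if_neg (by linarith)]
    exact (hasDerivAt_const u (0:ℝ)).congr_of_eventuallyEq hev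
  · subst h
    rw [aux11_th', if_neg (by linarith)]
    rw [hasDerivAt_iff_isLittleO, Asymptotics.isLittleO_iff]
    intro c hc
    have hr : 0 < min 1 (c * δ ^ 2 / 4) := by positivity
    filter_upwards [eventually_abs_sub_lt 1 hr] with x hx
    rw [Real.norm_eq_abs, Real.norm_eq_abs]
    have key : |aux11_th δ x - aux11_th δ 1 - (x - 1) • 0| ≤ c * |x - 1| := by
      rw [smul_zero, sub_zero]
      have h1 : aux11_th δ 1 = 0 := by rw [aux11_th, if_neg (by norm_num)]
      rw [h1, sub_zero]
      rcases le_or_gt x 1 with h' | h'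
      · rw [aux11_th, if_neg (not_lt.mpr h')]
        simp
        positivity
      · rw [aux11_th, if_pos h']
        have hx1 : 0 < x - 1 := by linarith
        have hb : Real.exp (-δ / (x - 1) ^ 2) ≤ 4 * (x - 1) ^ 4 / δ ^ 2 := by
          rw [neg_div]
          calc Real.exp (-(δ / (x - 1) ^ 2)) ≤ 4 / (δ / (x - 1) ^ 2) ^ 2 :=
                aux11_exp_neg_le_sq (δ / (x - 1) ^ 2) (by positivity)
            _ = 4 * (x - 1) ^ 4 / δ ^ 2 := by
                field_simp
        rw [abs_of_pos (Real.exp_pos _), abs_of_pos hx1]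
        rw [abs_of_pos hx1] at hx
        have hle1 : x - 1 ≤ 1 := le_of_lt (lt_of_lt_of_le hx (min_le_left _ _))
        have hle2 : x - 1 ≤ c * δ ^ 2 / 4 := le_of_lt (lt_of_lt_of_le hx (min_le_right _ _))
        have h2 : (x - 1) ^ 3 ≤ c * δ ^ 2 / 4 := by
          calc (x - 1) ^ 3 ≤ (x - 1) := by nlinarith
            _ ≤ c * δ ^ 2 / 4 := hle2
        calc Real.exp (-δ / (x - 1) ^ 2) ≤ 4 * (x - 1) ^ 4 / δ ^ 2 := hb
          _ = (4 / δ ^ 2 * (x - 1) ^ 3) * (x - 1) := by ring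
          _ ≤ c * (x - 1) := by
              apply mul_le_mul_of_nonneg_right _ hx1.le
              rw [div_mul_eq_mul_div, div_le_iff₀ (by positivity)]
              nlinarith
    exact key
  · have hd0 : HasDerivAt (fun x : ℝ => (x - 1) ^ 2) (2 * (u - 1)) u := by
      simpa using ((hasDerivAt_id u).sub_const 1).fun_pow 2
    have hu1 : u - 1 ≠ 0 := sub_ne_zero_of_ne h.ne'
    have hne : (u - 1) ^ 2 ≠ 0 := pow_ne_zero 2 hu1
    have hd1 := ((hd0.fun_inv hne).const_mul (-δ)).exp
    have hev : aux11_th δ =ᶠ[nhds u] fun x => Real.exp (-δ * ((x - 1) ^ 2)⁻¹) := by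
      filter_upwards [eventually_gt_nhds h] with x hx
      rw [aux11_th, if_pos hx, neg_div, div_eq_mul_inv, neg_mul]
    have := hd1.congr_of_eventuallyEq hev
    refine this.congr_deriv ?_
    rw [aux11_th', if_pos h, neg_div, div_eq_mul_inv, neg_mul]
    field_simp

lemma aux11_th_mem {δ : ℝ} (hδ : 0 < δ) (u : ℝ) :
    0 ≤ aux11_th δ u ∧ aux11_th δ u ≤ 1 := by
  rw [aux11_th]
  split_ifs with h
  · refine ⟨(Real.exp_pos _).le, Real.exp_le_one_iff.mpr ?_⟩
    rw [neg_div]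
    simp only [Left.neg_nonpos_iff]
    positivity
  · norm_num

lemma aux11_th'_nonneg {δ : ℝ} (hδ : 0 < δ) (u : ℝ) : 0 ≤ aux11_th' δ u := by
  rw [aux11_th']
  split_ifs with h
  · have h1 : (0:ℝ) < u - 1 := by linarith
    positivity
  · exact le_refl _

lemma aux11_th'_le {δ : ℝ} (hδ : 0 < δ) (u : ℝ) : aux11_th' δ u ≤ 8 / Real.sqrt δ := by
  have hs0 : 0 < Real.sqrt δ := Real.sqrt_pos.mpr hδ
  set s := Real.sqrt δ with hsdef
  have hs : s ^ 2 = δ := Real.sq_sqrt hδ.le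
  rw [aux11_th']
  split_ifs with h
  · obtain ⟨v, hv0, hu⟩ : ∃ v : ℝ, 0 < v ∧ u = v + 1 := ⟨u - 1, by linarith, by ring⟩
    subst hu
    have h1 : v + 1 - 1 = v := by ring
    rw [h1]
    rcases le_or_gt v s with hc | hc
    · have hexp : Real.exp (-δ / v ^ 2) ≤ 4 * v ^ 4 / δ ^ 2 := by
        rw [neg_div]
        calc Real.exp (-(δ / v ^ 2)) ≤ 4 / (δ / v ^ 2) ^ 2 :=
              aux11_exp_neg_le_sq _ (by positivity)
          _ = 4 * v ^ 4 / δ ^ 2 := by field_simp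
      calc Real.exp (-δ / v ^ 2) * (2 * δ / v ^ 3)
          ≤ (4 * v ^ 4 / δ ^ 2) * (2 * δ / v ^ 3) :=
            mul_le_mul_of_nonneg_right hexp (by positivity)
        _ = 8 * v / δ := by field_simp; ring
        _ ≤ 8 * s / δ := by gcongr
        _ = 8 / s := by rw [← hs]; field_simp
    · have hexp : Real.exp (-δ / v ^ 2) ≤ 1 := by
        rw [Real.exp_le_one_iff, neg_div]
        simp only [Left.neg_nonpos_iff]
        positivity
      calc Real.exp (-δ / v ^ 2) * (2 * δ / v ^ 3)
          ≤ 1 * (2 * δ / v ^ 3) :=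
            mul_le_mul_of_nonneg_right hexp (by positivity)
        _ = 2 * δ / v ^ 3 := by ring
        _ ≤ 2 * δ / s ^ 3 := by
            apply div_le_div_of_nonneg_left (by positivity) (by positivity)
            gcongr

        _ = 2 / s := by rw [← hs]; field_simp
        _ ≤ 8 / s := by gcongr <;> norm_num
  · positivity

lemma aux11_mul_th'_le {δ : ℝ} (hδ : 0 < δ) (u : ℝ) :
    u * aux11_th' δ u ≤ 2 + 8 / Real.sqrt δ := by
  have hs0 : 0 < Real.sqrt δ := Real.sqrt_pos.mpr hδ
  have hth := aux11_th'_le hδ u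
  rcases le_or_gt u 1 with h | h
  · rw [aux11_th', if_neg (not_lt.mpr h), mul_zero]
    positivity
  · have hE : aux11_th' δ u = Real.exp (-δ / (u - 1) ^ 2) * (2 * δ / (u - 1) ^ 3) := by
      rw [aux11_th', if_pos h]
    obtain ⟨v, hv0, hu⟩ : ∃ v : ℝ, 0 < v ∧ u = v + 1 := ⟨u - 1, by linarith, by ring⟩
    have h1 : u - 1 = v := by rw [hu]; ring
    rw [h1] at hE
    have hvE : v * (Real.exp (-δ / v ^ 2) * (2 * δ / v ^ 3)) ≤ 2 := by
      have hexp : Real.exp (-δ / v ^ 2) ≤ v ^ 2 / δ := by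
        rw [neg_div]
        calc Real.exp (-(δ / v ^ 2)) ≤ 1 / (δ / v ^ 2) :=
              aux11_exp_neg_le_inv _ (by positivity)
          _ = v ^ 2 / δ := by field_simp
      calc v * (Real.exp (-δ / v ^ 2) * (2 * δ / v ^ 3))
          = Real.exp (-δ / v ^ 2) * (2 * δ / v ^ 2) := by field_simp
        _ ≤ (v ^ 2 / δ) * (2 * δ / v ^ 2) := mul_le_mul_of_nonneg_right hexp (by positivity)
        _ = 2 := by field_simp
    calc u * aux11_th' δ u
        = v * (Real.exp (-δ / v ^ 2) * (2 * δ / v ^ 3)) + aux11_th' δ u := by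
          rw [hE, hu]; ring
      _ ≤ 2 + 8 / Real.sqrt δ := add_le_add hvE hth

lemma aux11_mul_th'_nonneg {δ : ℝ} (hδ : 0 < δ) (u : ℝ) : 0 ≤ u * aux11_th' δ u := by
  rcases le_or_gt u 1 with h | h
  · rw [aux11_th', if_neg (not_lt.mpr h), mul_zero]
  · exact mul_nonneg (by linarith) (aux11_th'_nonneg hδ u)

/-! ### Mean value theorem consequences -/

lemma aux11_lip_scale (F F' : ℝ → ℝ) (K : ℝ) (hd : ∀ u, HasDerivAt F (F' u) u)
    (hb : ∀ u, |F' u| ≤ K) (t : ℝ) (ht : 0 ≤ t) (C₁ C₂ : ℝ) :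
    |F (C₁ * t) - F (C₂ * t)| ≤ K * t * |C₁ - C₂| := by
  have hg : ∀ x : ℝ, HasDerivAt (fun C => F (C * t)) (F' (x * t) * t) x := by
    intro x
    have h1 : HasDerivAt (fun C : ℝ => C * t) t x := by
      simpa using (hasDerivAt_id x).mul_const t
    exact (hd (x * t)).comp x h1
  have := convex_univ.norm_image_sub_le_of_norm_hasDerivWithin_le
    (f := fun C => F (C * t)) (f' := fun x => F' (x * t) * t) (C := K * t)
    (fun x _ => (hg x).hasDerivWithinAt)
    (fun x _ => by
      rw [Real.norm_eq_abs, abs_mul, abs_of_nonneg ht]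
      exact mul_le_mul_of_nonneg_right (hb _) ht)
    (Set.mem_univ C₂) (Set.mem_univ C₁)
  simpa [Real.norm_eq_abs] using this

lemma aux11_lip_param (F F' : ℝ → ℝ) (K m : ℝ) (hm : 0 < m) (hK : 0 ≤ K)
    (hd : ∀ u, HasDerivAt F (F' u) u)
    (hub : ∀ u, |u * F' u| ≤ K)
    (C t₁ t₂ : ℝ) (h₁ : m ≤ t₁) (h₂ : m ≤ t₂) :
    |F (C * t₁) - F (C * t₂)| ≤ (K / m) * |t₁ - t₂| := by
  have hg : ∀ x : ℝ, HasDerivAt (fun t => F (C * t)) (F' (C * x) * C) x := by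
    intro x
    have h1 : HasDerivAt (fun t : ℝ => C * t) C x := by
      simpa using (hasDerivAt_id x).const_mul C
    exact (hd (C * x)).comp x h1
  have := (convex_Ici m).norm_image_sub_le_of_norm_hasDerivWithin_le
    (f := fun t => F (C * t)) (f' := fun x => F' (C * x) * C) (C := K / m)
    (fun x _ => (hg x).hasDerivWithinAt)
    (fun x hx => by
      rw [Set.mem_Ici] at hx
      have hx0 : 0 < x := lt_of_lt_of_le hm hx
      rw [Real.norm_eq_abs]
      rw [div_eq_mul_inv]
      have key : |F' (C * x) * C| * x ≤ K := by
        calc |F' (C * x) * C| * x = |F' (C * x) * C * x| := by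
              rw [abs_mul (F' (C*x) * C) x, abs_of_pos hx0]
          _ = |(C * x) * F' (C * x)| := by ring_nf
          _ ≤ K := hub _
      calc |F' (C * x) * C| ≤ K / x := (le_div_iff₀ hx0).mpr key
        _ ≤ K / m := by gcongr
        _ = K * m⁻¹ := div_eq_mul_inv K m)
    (Set.mem_Ici.mpr h₂) (Set.mem_Ici.mpr h₁)
  simpa [Real.norm_eq_abs] using this

lemma aux11_F_two_var (F F' : ℝ → ℝ) (K : ℝ) (hK : 0 ≤ K)
    (hd : ∀ u, HasDerivAt F (F' u) u)
    (hb : ∀ u, |F' u| ≤ K) (hub : ∀ u, |u * F' u| ≤ K)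
    (s : ℝ → ℝ) (m smax Ls : ℝ) (hm : 0 < m)
    (hslb : ∀ H, m ≤ s H) (hsub : ∀ H, s H ≤ smax)
    (hslip : ∀ H₁ H₂ : ℝ, |s H₁ - s H₂| ≤ Ls * |H₁ - H₂|)
    (C₁ C₂ H₁ H₂ : ℝ) :
    |F (C₁ * s H₁) - F (C₂ * s H₂)| ≤
      K * smax * |C₁ - C₂| + (K / m) * Ls * |H₁ - H₂| := by
  have hs1 : 0 ≤ s H₁ := le_trans hm.le (hslb H₁)
  have l1 : |F (C₁ * s H₁) - F (C₂ * s H₁)| ≤ K * smax * |C₁ - C₂| := by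
    calc |F (C₁ * s H₁) - F (C₂ * s H₁)| ≤ K * s H₁ * |C₁ - C₂| :=
          aux11_lip_scale F F' K hd hb (s H₁) hs1 C₁ C₂
      _ ≤ K * smax * |C₁ - C₂| := by
          apply mul_le_mul_of_nonneg_right _ (abs_nonneg _)
          exact mul_le_mul_of_nonneg_left (hsub H₁) hK
  have l2 : |F (C₂ * s H₁) - F (C₂ * s H₂)| ≤ (K / m) * Ls * |H₁ - H₂| := by
    calc |F (C₂ * s H₁) - F (C₂ * s H₂)| ≤ (K / m) * |s H₁ - s H₂| :=
          aux11_lip_param F F' K m hm hK hd hub C₂ (s H₁) (s H₂) (hslb H₁) (hslb H₂)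
      _ ≤ (K / m) * (Ls * |H₁ - H₂|) :=
          mul_le_mul_of_nonneg_left (hslip H₁ H₂) (by positivity)
      _ = (K / m) * Ls * |H₁ - H₂| := by ring
  calc |F (C₁ * s H₁) - F (C₂ * s H₂)|
      ≤ |F (C₁ * s H₁) - F (C₂ * s H₁)| + |F (C₂ * s H₁) - F (C₂ * s H₂)| :=
        abs_sub_le _ _ _
    _ ≤ K * smax * |C₁ - C₂| + (K / m) * Ls * |H₁ - H₂| := add_le_add l1 l2

/-! ### Lipschitz bound for `P` -/

lemma aux11_P_hasDeriv (Ka1 Ka2 Ka3 KCO2 : ℝ) (H : ℝ) :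
    HasDerivAt (fun H => KCO2 / (1 + Real.exp (-Ka1 * (H - Ka2) * (H + Ka3))))
      (KCO2 * (-(Real.exp (-Ka1 * (H - Ka2) * (H + Ka3)) * (-Ka1 * (2 * H + Ka3 - Ka2))) /
        (1 + Real.exp (-Ka1 * (H - Ka2) * (H + Ka3))) ^ 2)) H := by
  have hw : HasDerivAt (fun H : ℝ => -Ka1 * (H - Ka2) * (H + Ka3))
      (-Ka1 * (2 * H + Ka3 - Ka2)) H := by
    have h1 := (((hasDerivAt_id H).sub_const Ka2).const_mul (-Ka1)).mul
      ((hasDerivAt_id H).add_const Ka3)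
    have heq : -Ka1 * (2 * H + Ka3 - Ka2) =
        -Ka1 * 1 * (H + Ka3) + -Ka1 * (H - Ka2) * 1 := by ring
    rw [heq]
    exact h1
  have hexp := hw.exp
  have hden := hexp.const_add 1
  have hne : 1 + Real.exp (-Ka1 * (H - Ka2) * (H + Ka3)) ≠ 0 := by positivity
  have hinv := (hden.inv hne).const_mul KCO2
  have heq : (fun H : ℝ => KCO2 / (1 + Real.exp (-Ka1 * (H - Ka2) * (H + Ka3)))) =
      fun H : ℝ => KCO2 * (1 + Real.exp (-Ka1 * (H - Ka2) * (H + Ka3)))⁻¹ := by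
    funext x; rw [div_eq_mul_inv]
  rw [heq]
  exact hinv

lemma aux11_w_le_M (Ka1 Ka2 Ka3 H : ℝ) (hKa1 : 0 < Ka1) :
    -Ka1 * (H - Ka2) * (H + Ka3) ≤ Ka1 * (Ka2 + Ka3) ^ 2 / 4 := by
  nlinarith [sq_nonneg (H + (Ka3 - Ka2) / 2), hKa1.le, sq_nonneg (Ka2 + Ka3)]

set_option maxHeartbeats 1000000 in
lemma aux11_P_deriv_bound (Ka1 Ka2 Ka3 KCO2 : ℝ) (hKa1 : 0 < Ka1) (hKa2 : 0 < Ka2)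
    (hKa3 : 0 < Ka3) (hKCO2 : 0 < KCO2) (H : ℝ) :
    |KCO2 * (-(Real.exp (-Ka1 * (H - Ka2) * (H + Ka3)) * (-Ka1 * (2 * H + Ka3 - Ka2))) /
        (1 + Real.exp (-Ka1 * (H - Ka2) * (H + Ka3))) ^ 2)|
      ≤ KCO2 * (Ka1 * (3 * (Ka2 + Ka3) + 2) *
          Real.exp (Ka1 * (Ka2 + Ka3) ^ 2 / 4) + (3 * (Ka2 + Ka3) + 2)) := by
  obtain ⟨b, hb⟩ : ∃ b : ℝ, b = Ka2 + Ka3 := ⟨_, rfl⟩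
  rw [← hb]
  have hb0 : 0 < b := by rw [hb]; positivity
  obtain ⟨w, hw⟩ : ∃ w : ℝ, w = -Ka1 * (H - Ka2) * (H + Ka3) := ⟨_, rfl⟩
  rw [← hw]
  have hE : 0 < Real.exp w := Real.exp_pos w
  have hden : 1 ≤ (1 + Real.exp w) ^ 2 := by nlinarith
  have key : Real.exp w * (Ka1 * |2 * H + Ka3 - Ka2|) ≤
      Ka1 * (3 * b + 2) * Real.exp (Ka1 * b ^ 2 / 4) + (3 * b + 2) := by
    rcases le_or_gt (|H|) (b + 1) with hH | hH
    · have h1 : |2 * H + Ka3 - Ka2| ≤ 3 * b + 2 := by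
        have h2 := abs_le.mp hH
        rw [abs_le]
        constructor <;> nlinarith [abs_nonneg H, le_abs_self H, neg_abs_le H]
      have h2 : Real.exp w ≤ Real.exp (Ka1 * b ^ 2 / 4) := by
        apply Real.exp_le_exp.mpr
        rw [hw, hb]
        exact aux11_w_le_M Ka1 Ka2 Ka3 H hKa1
      calc Real.exp w * (Ka1 * |2 * H + Ka3 - Ka2|)
          ≤ Real.exp (Ka1 * b ^ 2 / 4) * (Ka1 * (3 * b + 2)) := by
            apply mul_le_mul h2 (by nlinarith [abs_nonneg (2*H+Ka3-Ka2)])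
              (by positivity) (by positivity)
        _ ≤ Ka1 * (3 * b + 2) * Real.exp (Ka1 * b ^ 2 / 4) + (3 * b + 2) := by
            have h3 : (0:ℝ) < 3 * b + 2 := by linarith
            linarith
    · have hx : ∃ x : ℝ, 1 ≤ x ∧ (x ≤ H - b ∨ x ≤ -H - b) ∧ x = |H| - b := by
        rcases abs_cases H with ⟨h1, _⟩ | ⟨h1, _⟩
        · exact ⟨|H| - b, by linarith, Or.inl (by linarith), rfl⟩
        · exact ⟨|H| - b, by linarith, Or.inr (by linarith), rfl⟩
      obtain ⟨x, hx1, hxc, hxe⟩ := hx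
      have hprod : x ^ 2 ≤ (H - Ka2) * (H + Ka3) := by
        rcases hxc with hcase | hcase
        · have hH1 : x ≤ H - Ka2 := by nlinarith
          have hH2 : x ≤ H + Ka3 := by nlinarith
          nlinarith
        · have hH1 : H - Ka2 ≤ -x := by nlinarith
          have hH2 : H + Ka3 ≤ -x := by nlinarith
          nlinarith
      have hwle : w ≤ -(Ka1 * x ^ 2) := by
        rw [hw]; nlinarith
      have hexple : Real.exp w ≤ 1 / (Ka1 * x ^ 2) := by
        calc Real.exp w ≤ Real.exp (-(Ka1 * x ^ 2)) := Real.exp_le_exp.mpr hwle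
          _ ≤ 1 / (Ka1 * x ^ 2) := aux11_exp_neg_le_inv _ (by positivity)
      have habs : |2 * H + Ka3 - Ka2| ≤ 2 * x + 3 * b := by
        rw [abs_le]
        constructor <;> nlinarith [le_abs_self H, neg_abs_le H]
      calc Real.exp w * (Ka1 * |2 * H + Ka3 - Ka2|)
          ≤ (1 / (Ka1 * x ^ 2)) * (Ka1 * (2 * x + 3 * b)) := by
            apply mul_le_mul hexple (by nlinarith [abs_nonneg (2*H+Ka3-Ka2)])
              (by positivity) (by positivity)
        _ = (2 * x + 3 * b) / x ^ 2 := by field_simp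
        _ ≤ 3 * b + 2 := by
            rw [div_le_iff₀ (by positivity)]
            have hx2 : x ≤ x ^ 2 := by nlinarith
            have hb2 : 3 * b ≤ 3 * b * x ^ 2 := by nlinarith
            nlinarith
        _ ≤ Ka1 * (3 * b + 2) * Real.exp (Ka1 * b ^ 2 / 4) + (3 * b + 2) := by
            have h3 : (0:ℝ) < Ka1 * (3 * b + 2) * Real.exp (Ka1 * b ^ 2 / 4) := by
              have : (0:ℝ) < 3 * b + 2 := by linarith
              positivity
            linarith
  have lhs_eq : |KCO2 * (-(Real.exp w * (-Ka1 * (2 * H + Ka3 - Ka2))) / (1 + Real.exp w) ^ 2)|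
      = KCO2 * (Real.exp w * (Ka1 * |2 * H + Ka3 - Ka2|)) / (1 + Real.exp w) ^ 2 := by
    rw [abs_mul, abs_div, abs_of_pos hKCO2,
      abs_of_pos (by positivity : (0:ℝ) < (1 + Real.exp w) ^ 2),
      abs_neg, abs_mul, abs_of_pos hE, abs_mul, abs_neg, abs_of_pos hKa1]
    ring
  rw [lhs_eq]
  calc KCO2 * (Real.exp w * (Ka1 * |2 * H + Ka3 - Ka2|)) / (1 + Real.exp w) ^ 2
      ≤ KCO2 * (Real.exp w * (Ka1 * |2 * H + Ka3 - Ka2|)) / 1 := by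
        apply div_le_div_of_nonneg_left (by positivity) (by norm_num) hden
    _ = KCO2 * (Real.exp w * (Ka1 * |2 * H + Ka3 - Ka2|)) := by ring
    _ ≤ KCO2 * (Ka1 * (3 * b + 2) * Real.exp (Ka1 * b ^ 2 / 4) + (3 * b + 2)) :=
        mul_le_mul_of_nonneg_left key hKCO2.le

lemma aux11_P_lip (Ka1 Ka2 Ka3 KCO2 : ℝ) (hKa1 : 0 < Ka1) (hKa2 : 0 < Ka2)
    (hKa3 : 0 < Ka3) (hKCO2 : 0 < KCO2) (H₁ H₂ : ℝ) :
    |KCO2 / (1 + Real.exp (-Ka1 * (H₁ - Ka2) * (H₁ + Ka3))) -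
      KCO2 / (1 + Real.exp (-Ka1 * (H₂ - Ka2) * (H₂ + Ka3)))|
      ≤ (KCO2 * (Ka1 * (3 * (Ka2 + Ka3) + 2) *
          Real.exp (Ka1 * (Ka2 + Ka3) ^ 2 / 4) + (3 * (Ka2 + Ka3) + 2))) * |H₁ - H₂| := by
  have := convex_univ.norm_image_sub_le_of_norm_hasDerivWithin_le
    (f := fun H => KCO2 / (1 + Real.exp (-Ka1 * (H - Ka2) * (H + Ka3))))
    (f' := fun H => KCO2 * (-(Real.exp (-Ka1 * (H - Ka2) * (H + Ka3)) *
        (-Ka1 * (2 * H + Ka3 - Ka2))) / (1 + Real.exp (-Ka1 * (H - Ka2) * (H + Ka3))) ^ 2))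
    (C := KCO2 * (Ka1 * (3 * (Ka2 + Ka3) + 2) *
          Real.exp (Ka1 * (Ka2 + Ka3) ^ 2 / 4) + (3 * (Ka2 + Ka3) + 2)))
    (fun x _ => (aux11_P_hasDeriv Ka1 Ka2 Ka3 KCO2 x).hasDerivWithinAt)
    (fun x _ => by
      rw [Real.norm_eq_abs]
      exact aux11_P_deriv_bound Ka1 Ka2 Ka3 KCO2 hKa1 hKa2 hKa3 hKCO2 x)
    (Set.mem_univ H₂) (Set.mem_univ H₁)
  simpa [Real.norm_eq_abs] using this

lemma aux11_sqrt_lip (m a b : ℝ) (hm : 0 < m) (ha : m ≤ a) (hb : m ≤ b) :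
    |Real.sqrt a - Real.sqrt b| ≤ |a - b| / (2 * Real.sqrt m) := by
  have hsm : 0 < Real.sqrt m := Real.sqrt_pos.mpr hm
  rw [le_div_iff₀ (by positivity)]
  have h1 : Real.sqrt m ≤ Real.sqrt a := Real.sqrt_le_sqrt ha
  have h2 : Real.sqrt m ≤ Real.sqrt b := Real.sqrt_le_sqrt hb
  have key : |Real.sqrt a - Real.sqrt b| * (Real.sqrt a + Real.sqrt b) = |a - b| := by
    rw [← abs_of_nonneg (by positivity : (0:ℝ) ≤ Real.sqrt a + Real.sqrt b), ← abs_mul]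
    congr 1
    rw [show (Real.sqrt a - Real.sqrt b) * (Real.sqrt a + Real.sqrt b)
        = Real.sqrt a ^ 2 - Real.sqrt b ^ 2 from by ring,
      Real.sq_sqrt (by linarith : (0:ℝ) ≤ a), Real.sq_sqrt (by linarith : (0:ℝ) ≤ b)]
  calc |Real.sqrt a - Real.sqrt b| * (2 * Real.sqrt m)
      ≤ |Real.sqrt a - Real.sqrt b| * (Real.sqrt a + Real.sqrt b) := by
        apply mul_le_mul_of_nonneg_left (by linarith) (abs_nonneg _)
    _ = |a - b| := key

lemma aux11_rpow_assemble (p x A1 A2 D1 D2 : ℝ) (hx : 0 ≤ x) (hp : 0 ≤ p)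
    (hA1 : 0 ≤ A1) (hA2 : 0 ≤ A2) (hD1 : 0 ≤ D1) (hD2 : 0 ≤ D2)
    (h : x ^ 2 ≤ A1 * D1 + A2 * D2) :
    x ^ (2 * p) ≤ (2 * A1) ^ p * D1 ^ p + (2 * A2) ^ p * D2 ^ p := by
  have h2 : x ^ (2 * p) = (x ^ 2) ^ p := by
    rw [Real.rpow_mul hx, Real.rpow_two]
  rw [h2]
  rcases le_total (A1 * D1) (A2 * D2) with hc | hc
  · have hle : (x ^ 2) ^ p ≤ (2 * A2 * D2) ^ p := by
      apply Real.rpow_le_rpow (by positivity) (by linarith) hp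
    have heq : (2 * A2 * D2) ^ p = (2 * A2) ^ p * D2 ^ p :=
      Real.mul_rpow (by positivity) hD2
    have hpos : 0 ≤ (2 * A1) ^ p * D1 ^ p := by positivity
    rw [heq] at hle
    linarith
  · have hle : (x ^ 2) ^ p ≤ (2 * A1 * D1) ^ p := by
      apply Real.rpow_le_rpow (by positivity) (by linarith) hp
    have heq : (2 * A1 * D1) ^ p = (2 * A1) ^ p * D1 ^ p :=
      Real.mul_rpow (by positivity) hD1
    have hpos : 0 ≤ (2 * A2) ^ p * D2 ^ p := by positivity
    rw [heq] at hle
    linarith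

set_option maxHeartbeats 1600000 in
/-- Hölder-power Lipschitz bounds for the growth rate `a` and
nucleation rate `N` of the precipitation model. -/
theorem stmt_11 (kg kN δ Ksp K1sat K2sat KCO2 Ka1 Ka2 Ka3 : ℝ)
    (hkg : 0 < kg) (hkN : 0 < kN) (hδ : 0 < δ) (hKsp : 0 < Ksp)
    (hK1 : 0 < K1sat) (hK2 : 0 < K2sat) (hKCO2 : 0 < KCO2)
    (hKa1 : 0 < Ka1) (hKa2 : 0 < Ka2) (hKa3 : 0 < Ka3)
    (P Csat : ℝ → ℝ) (Ct a N : ℝ → ℝ → ℝ)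
    (hP : ∀ H : ℝ, P H = KCO2 / (1 + Real.exp (-Ka1 * (H - Ka2) * (H + Ka3))))
    (hCsat : ∀ H : ℝ, Csat H = K1sat / (1 + K2sat * Real.sqrt (P H / Ksp)))
    (hCt : ∀ C H : ℝ, Ct C H = max (C / Csat H - 1) 0)
    (ha : ∀ C H : ℝ, a C H = kg * Real.tanh (Ct C H ^ 2))
    (hN : ∀ C H : ℝ,
      N C H = if 0 < Ct C H then kN * Real.exp (-δ / Ct C H ^ 2) else 0) :
    ∀ p : ℝ, 1 ≤ p →
      ∃ LaC LaH LNC LNH : ℝ,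
        0 < LaC ∧ 0 < LaH ∧ 0 < LNC ∧ 0 < LNH ∧
        ∀ C₁ C₂ H₁ H₂ : ℝ,
          |a C₁ H₁ - a C₂ H₂| ^ (2 * p) ≤
            LaC * |C₁ - C₂| ^ p + LaH * |H₁ - H₂| ^ p ∧
          |N C₁ H₁ - N C₂ H₂| ^ (2 * p) ≤
            LNC * |C₁ - C₂| ^ p + LNH * |H₁ - H₂| ^ p := by
  intro p hp
  have hp0 : (0:ℝ) ≤ p := by linarith
  -- upper and lower bounds on P
  have hPub : ∀ H, P H ≤ KCO2 := by
    intro H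
    rw [hP H]
    calc KCO2 / (1 + Real.exp (-Ka1 * (H - Ka2) * (H + Ka3))) ≤ KCO2 / 1 := by
          apply div_le_div_of_nonneg_left hKCO2.le one_pos
          linarith [Real.exp_pos (-Ka1 * (H - Ka2) * (H + Ka3))]
      _ = KCO2 := div_one _
  obtain ⟨Pmin, hPmin_pos, hPmin⟩ : ∃ Pm : ℝ, 0 < Pm ∧ ∀ H, Pm ≤ P H := by
    refine ⟨KCO2 / (1 + Real.exp (Ka1 * (Ka2 + Ka3) ^ 2 / 4)), by positivity, fun H => ?_⟩
    rw [hP H]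
    apply div_le_div_of_nonneg_left hKCO2.le (by positivity)
    have h1 := Real.exp_le_exp.mpr (aux11_w_le_M Ka1 Ka2 Ka3 H hKa1)
    linarith
  obtain ⟨Lp, hLp_pos, hLp⟩ : ∃ Lp : ℝ, 0 < Lp ∧ ∀ H₁ H₂, |P H₁ - P H₂| ≤ Lp * |H₁ - H₂| := by
    refine ⟨KCO2 * (Ka1 * (3 * (Ka2 + Ka3) + 2) *
        Real.exp (Ka1 * (Ka2 + Ka3) ^ 2 / 4) + (3 * (Ka2 + Ka3) + 2)), ?_, fun H₁ H₂ => ?_⟩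
    · have h32 : (0:ℝ) < 3 * (Ka2 + Ka3) + 2 := by linarith
      have he := Real.exp_pos (Ka1 * (Ka2 + Ka3) ^ 2 / 4)
      have h1 : 0 < Ka1 * (3 * (Ka2 + Ka3) + 2) * Real.exp (Ka1 * (Ka2 + Ka3) ^ 2 / 4) :=
        mul_pos (mul_pos hKa1 h32) he
      exact mul_pos hKCO2 (by linarith)
    · rw [hP H₁, hP H₂]
      exact aux11_P_lip Ka1 Ka2 Ka3 KCO2 hKa1 hKa2 hKa3 hKCO2 H₁ H₂
  -- the reciprocal saturation function
  obtain ⟨sf, hsf⟩ : ∃ sf : ℝ → ℝ,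
      sf = fun H => (1 + K2sat * Real.sqrt (P H / Ksp)) / K1sat := ⟨_, rfl⟩
  have hsfH : ∀ H, sf H = (1 + K2sat * Real.sqrt (P H / Ksp)) / K1sat := by
    intro H; rw [hsf]
  have hm : (0:ℝ) < 1 / K1sat := by positivity
  have hslb : ∀ H, 1 / K1sat ≤ sf H := by
    intro H
    rw [hsfH H]
    have h0 : (0:ℝ) ≤ K2sat * Real.sqrt (P H / Ksp) := by positivity
    gcongr
    linarith
  obtain ⟨smax, hsmax_pos, hsub⟩ : ∃ smax : ℝ, 0 < smax ∧ ∀ H, sf H ≤ smax := by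
    refine ⟨(1 + K2sat * Real.sqrt (KCO2 / Ksp)) / K1sat, by positivity, fun H => ?_⟩
    rw [hsfH H]
    have h1 : Real.sqrt (P H / Ksp) ≤ Real.sqrt (KCO2 / Ksp) := by
      apply Real.sqrt_le_sqrt
      gcongr
      exact hPub H
    gcongr
  obtain ⟨Ls, hLs_pos, hslip⟩ : ∃ Ls : ℝ, 0 < Ls ∧
      ∀ H₁ H₂, |sf H₁ - sf H₂| ≤ Ls * |H₁ - H₂| := by
    have hsq_pos : 0 < Real.sqrt (Pmin / Ksp) := Real.sqrt_pos.mpr (by positivity)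
    refine ⟨(K2sat / K1sat) * (Lp / Ksp) / (2 * Real.sqrt (Pmin / Ksp)), ?_, fun H₁ H₂ => ?_⟩
    · exact div_pos (mul_pos (by positivity) (div_pos hLp_pos hKsp)) (by positivity)
    · have heq : sf H₁ - sf H₂ =
          (K2sat / K1sat) * (Real.sqrt (P H₁ / Ksp) - Real.sqrt (P H₂ / Ksp)) := by
        rw [hsfH H₁, hsfH H₂]
        field_simp
        ring
      rw [heq, abs_mul, abs_of_pos (by positivity : (0:ℝ) < K2sat / K1sat)]
      have hsl : |Real.sqrt (P H₁ / Ksp) - Real.sqrt (P H₂ / Ksp)| ≤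
          |P H₁ / Ksp - P H₂ / Ksp| / (2 * Real.sqrt (Pmin / Ksp)) := by
        apply aux11_sqrt_lip (Pmin / Ksp) _ _ (by positivity)
        · gcongr; exact hPmin H₁
        · gcongr; exact hPmin H₂
      have habs : |P H₁ / Ksp - P H₂ / Ksp| = |P H₁ - P H₂| / Ksp := by
        rw [div_sub_div_same, abs_div, abs_of_pos hKsp]
      rw [habs] at hsl
      calc (K2sat / K1sat) * |Real.sqrt (P H₁ / Ksp) - Real.sqrt (P H₂ / Ksp)|
          ≤ (K2sat / K1sat) * (|P H₁ - P H₂| / Ksp / (2 * Real.sqrt (Pmin / Ksp))) :=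
            mul_le_mul_of_nonneg_left hsl (by positivity)
        _ ≤ (K2sat / K1sat) * (Lp * |H₁ - H₂| / Ksp / (2 * Real.sqrt (Pmin / Ksp))) := by
            gcongr
            exact hLp H₁ H₂
        _ = (K2sat / K1sat) * (Lp / Ksp) / (2 * Real.sqrt (Pmin / Ksp)) * |H₁ - H₂| := by
            field_simp
  -- rewrite a and N through φ and θ
  have hCsat_pos : ∀ H, 0 < Csat H := by
    intro H
    rw [hCsat H]
    have h0 : (0:ℝ) ≤ K2sat * Real.sqrt (P H / Ksp) := by positivity
    positivity
  have hdiv : ∀ C H : ℝ, C / Csat H = C * sf H := by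
    intro C H
    rw [hCsat H, hsfH H]
    have h0 : (0:ℝ) < 1 + K2sat * Real.sqrt (P H / Ksp) := by positivity
    rw [div_div_eq_mul_div, mul_div_assoc]
  have haid : ∀ C H : ℝ, a C H = kg * aux11_phi (C * sf H) := by
    intro C H
    rw [ha C H, hCt C H, hdiv C H]
    rfl
  have hNid : ∀ C H : ℝ, N C H = kN * aux11_th δ (C * sf H) := by
    intro C H
    rw [hN C H, hCt C H, hdiv C H, aux11_th]
    rcases lt_or_ge 1 (C * sf H) with h1 | h1
    · rw [if_pos h1, if_pos (by rw [max_eq_left (by linarith)]; linarith)]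
      rw [max_eq_left (by linarith)]
    · rw [if_neg (not_lt.mpr h1), if_neg (by rw [max_eq_right (by linarith)]; norm_num), mul_zero]
  -- derivative bounds as absolute values
  have hb_phi : ∀ u, |aux11_phi' u| ≤ 8 := fun u => by
    rw [abs_of_nonneg (aux11_phi'_nonneg u)]; exact aux11_phi'_le u
  have hub_phi : ∀ u, |u * aux11_phi' u| ≤ 8 := fun u => by
    rw [abs_of_nonneg (aux11_mul_phi'_nonneg u)]; exact aux11_mul_phi'_le u
  have hsd : 0 < Real.sqrt δ := Real.sqrt_pos.mpr hδ
  have hKt_pos : (0:ℝ) < 2 + 8 / Real.sqrt δ := by positivity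
  have hb_th : ∀ u, |aux11_th' δ u| ≤ 2 + 8 / Real.sqrt δ := fun u => by
    rw [abs_of_nonneg (aux11_th'_nonneg hδ u)]
    linarith [aux11_th'_le hδ u]
  have hub_th : ∀ u, |u * aux11_th' δ u| ≤ 2 + 8 / Real.sqrt δ := fun u => by
    rw [abs_of_nonneg (aux11_mul_th'_nonneg hδ u)]
    exact aux11_mul_th'_le hδ u
  -- the four constants
  have hA1 : (0:ℝ) < kg ^ 2 * (8 * smax) := by positivity
  have hA2 : (0:ℝ) < kg ^ 2 * ((8 / (1 / K1sat)) * Ls) := by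
    apply mul_pos (by positivity)
    exact mul_pos (by positivity) hLs_pos
  have hB1 : (0:ℝ) < kN ^ 2 * ((2 + 8 / Real.sqrt δ) * smax) := by positivity
  have hB2 : (0:ℝ) < kN ^ 2 * (((2 + 8 / Real.sqrt δ) / (1 / K1sat)) * Ls) := by
    apply mul_pos (by positivity)
    exact mul_pos (by positivity) hLs_pos
  refine ⟨(2 * (kg ^ 2 * (8 * smax))) ^ p,
    (2 * (kg ^ 2 * ((8 / (1 / K1sat)) * Ls))) ^ p,
    (2 * (kN ^ 2 * ((2 + 8 / Real.sqrt δ) * smax))) ^ p,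
    (2 * (kN ^ 2 * (((2 + 8 / Real.sqrt δ) / (1 / K1sat)) * Ls))) ^ p,
    Real.rpow_pos_of_pos (by linarith) p, Real.rpow_pos_of_pos (by linarith) p,
    Real.rpow_pos_of_pos (by linarith) p, Real.rpow_pos_of_pos (by linarith) p,
    fun C₁ C₂ H₁ H₂ => ?_⟩
  constructor
  · -- growth rate a
    have hlip := aux11_F_two_var aux11_phi aux11_phi' 8 (by norm_num)
      aux11_hasDerivAt_phi hb_phi hub_phi sf (1 / K1sat) smax Ls hm hslb hsub hslip
      C₁ C₂ H₁ H₂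
    have h1 : |a C₁ H₁ - a C₂ H₂| ≤
        kg * (8 * smax * |C₁ - C₂| + (8 / (1 / K1sat)) * Ls * |H₁ - H₂|) := by
      rw [haid C₁ H₁, haid C₂ H₂, ← mul_sub, abs_mul, abs_of_pos hkg]
      exact mul_le_mul_of_nonneg_left hlip hkg.le
    have h2 : |a C₁ H₁ - a C₂ H₂| ≤ kg := by
      rw [haid C₁ H₁, haid C₂ H₂, ← mul_sub, abs_mul, abs_of_pos hkg]
      have m1 := aux11_phi_mem (C₁ * sf H₁)
      have m2 := aux11_phi_mem (C₂ * sf H₂)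
      have h3 : |aux11_phi (C₁ * sf H₁) - aux11_phi (C₂ * sf H₂)| ≤ 1 := by
        rw [abs_sub_le_iff]
        constructor <;> linarith [m1.1, m1.2, m2.1, m2.2]
      calc kg * |aux11_phi (C₁ * sf H₁) - aux11_phi (C₂ * sf H₂)| ≤ kg * 1 :=
            mul_le_mul_of_nonneg_left h3 hkg.le
        _ = kg := mul_one kg
    have hsq : |a C₁ H₁ - a C₂ H₂| ^ 2 ≤
        (kg ^ 2 * (8 * smax)) * |C₁ - C₂| +
        (kg ^ 2 * ((8 / (1 / K1sat)) * Ls)) * |H₁ - H₂| := by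
      have h4 : |a C₁ H₁ - a C₂ H₂| ^ 2 ≤
          kg * (kg * (8 * smax * |C₁ - C₂| + (8 / (1 / K1sat)) * Ls * |H₁ - H₂|)) := by
        rw [sq]
        exact mul_le_mul h2 h1 (abs_nonneg _) hkg.le
      have h5 : kg * (kg * (8 * smax * |C₁ - C₂| + (8 / (1 / K1sat)) * Ls * |H₁ - H₂|)) =
          (kg ^ 2 * (8 * smax)) * |C₁ - C₂| +
          (kg ^ 2 * ((8 / (1 / K1sat)) * Ls)) * |H₁ - H₂| := by ring
      linarith [h4]
    exact aux11_rpow_assemble p _ _ _ _ _ (abs_nonneg _) hp0 hA1.le hA2.le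
      (abs_nonneg _) (abs_nonneg _) hsq
  · -- nucleation rate N
    have hlip := aux11_F_two_var (aux11_th δ) (aux11_th' δ) (2 + 8 / Real.sqrt δ) hKt_pos.le
      (aux11_hasDerivAt_th hδ) hb_th hub_th sf (1 / K1sat) smax Ls hm hslb hsub hslip
      C₁ C₂ H₁ H₂
    have h1 : |N C₁ H₁ - N C₂ H₂| ≤
        kN * ((2 + 8 / Real.sqrt δ) * smax * |C₁ - C₂| +
          ((2 + 8 / Real.sqrt δ) / (1 / K1sat)) * Ls * |H₁ - H₂|) := by
      rw [hNid C₁ H₁, hNid C₂ H₂, ← mul_sub, abs_mul, abs_of_pos hkN]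
      exact mul_le_mul_of_nonneg_left hlip hkN.le
    have h2 : |N C₁ H₁ - N C₂ H₂| ≤ kN := by
      rw [hNid C₁ H₁, hNid C₂ H₂, ← mul_sub, abs_mul, abs_of_pos hkN]
      have m1 := aux11_th_mem hδ (C₁ * sf H₁)
      have m2 := aux11_th_mem hδ (C₂ * sf H₂)
      have h3 : |aux11_th δ (C₁ * sf H₁) - aux11_th δ (C₂ * sf H₂)| ≤ 1 := by
        rw [abs_sub_le_iff]
        constructor <;> linarith [m1.1, m1.2, m2.1, m2.2]
      calc kN * |aux11_th δ (C₁ * sf H₁) - aux11_th δ (C₂ * sf H₂)| ≤ kN * 1 :=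
            mul_le_mul_of_nonneg_left h3 hkN.le
        _ = kN := mul_one kN
    have hsq : |N C₁ H₁ - N C₂ H₂| ^ 2 ≤
        (kN ^ 2 * ((2 + 8 / Real.sqrt δ) * smax)) * |C₁ - C₂| +
        (kN ^ 2 * (((2 + 8 / Real.sqrt δ) / (1 / K1sat)) * Ls)) * |H₁ - H₂| := by
      have h4 : |N C₁ H₁ - N C₂ H₂| ^ 2 ≤
          kN * (kN * ((2 + 8 / Real.sqrt δ) * smax * |C₁ - C₂| +
            ((2 + 8 / Real.sqrt δ) / (1 / K1sat)) * Ls * |H₁ - H₂|)) := by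
        rw [sq]
        exact mul_le_mul h2 h1 (abs_nonneg _) hkN.le
      have h5 : kN * (kN * ((2 + 8 / Real.sqrt δ) * smax * |C₁ - C₂| +
            ((2 + 8 / Real.sqrt δ) / (1 / K1sat)) * Ls * |H₁ - H₂|)) =
          (kN ^ 2 * ((2 + 8 / Real.sqrt δ) * smax)) * |C₁ - C₂| +
          (kN ^ 2 * (((2 + 8 / Real.sqrt δ) / (1 / K1sat)) * Ls)) * |H₁ - H₂| := by ring
      linarith [h4]
    exact aux11_rpow_assemble p _ _ _ _ _ (abs_nonneg _) hp0 hB1.le hB2.le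
      (abs_nonneg _) (abs_nonneg _) hsq
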